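/- Let n ≥ 2 and T ≥ 1 be integers, q ∈ [0, 1], and let μ be the product measure on Fin T → Bool in which each coordinate is an independent Bernoulli(q) random bit. In the lower-bound chain with n states, let the trajectory S_0, …, S_T from state 1 be driven by the T random bits. Then for every integer j with 2 ≤ j ≤ n, μ({x : ∃ t ≤ T, S_t(x) ≥ j}) ≤ T · q^{j−1}. -/

import Mathlib

open MeasureTheory

/-- The deterministic trajectory in the lower-bound chain with states `{1, …, n}`:
from state `s`, action `true` moves right (capped at `n`), action `false` resets to `1`. -/
def traj (n : ℕ) (a : ℕ → Bool) (s : ℕ) : ℕ → ℕ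
  | 0 => s
  | t + 1 => if a t then min (traj n a s t + 1) n else 1

lemma traj_chain (n : ℕ) (a : ℕ → Bool) :
    ∀ m t, m + 1 ≤ traj n a 1 t → m ≤ t ∧ ∀ i, t - m ≤ i → i < t → a i = true := by
  intro m
  induction m with
  | zero => exact fun t _ => ⟨Nat.zero_le t, fun i h1 h2 => absurd h2 (by omega)⟩
  | succ m ih =>
    intro t h
    match t with
    | 0 => simp [traj] at h
    | t + 1 =>
      rw [traj] at h
      by_cases ha : a t
      · rw [if_pos ha] at h
        have hs : m + 1 ≤ traj n a 1 t := by
          have := le_min_iff.mp h; omega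
        obtain ⟨hmt, hall⟩ := ih t hs
        refine ⟨by omega, fun i h1 h2 => ?_⟩
        rcases Nat.lt_succ_iff_lt_or_eq.mp h2 with h3 | h3
        · exact hall i (by omega) h3
        · subst h3; exact ha
      · rw [if_neg ha] at h; omega

/-- hitting-time bound. Under `T` independent `Bernoulli(q)` bits, the
trajectory of the chain with `n` states started from state `1` reaches a state `≥ j` within
`T` steps with probability at most `T * q^(j-1)`. -/
theorem hitting_prob_le (n T : ℕ) (hn : 2 ≤ n) (hT : 1 ≤ T)
    (q : ℝ) (hq0 : 0 ≤ q) (hq1 : q ≤ 1) (j : ℕ) (hj2 : 2 ≤ j) (hjn : j ≤ n) :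
    ((Measure.pi fun _ : Fin T =>
        (PMF.bernoulli (Real.toNNReal q) (Real.toNNReal_le_one.mpr hq1)).toMeasure)
      {x : Fin T → Bool | ∃ t ≤ T,
        j ≤ traj n (fun s => if h : s < T then x ⟨s, h⟩ else false) 1 t}).toReal
      ≤ T * q ^ (j - 1) := by
  set p : ENNReal := ENNReal.ofReal q with hp
  set ν : Measure Bool := (PMF.bernoulli (Real.toNNReal q) (Real.toNNReal_le_one.mpr hq1)).toMeasure with hν
  set μ : Measure (Fin T → Bool) := Measure.pi fun _ : Fin T => ν with hμ
  set A : ℕ → Set (Fin T → Bool) :=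
    fun t => {x | ∀ i : Fin T, t - (j - 1) ≤ (i : ℕ) → (i : ℕ) < t → x i = true} with hA
  have hsub : {x : Fin T → Bool | ∃ t ≤ T,
        j ≤ traj n (fun s => if h : s < T then x ⟨s, h⟩ else false) 1 t}
      ⊆ ⋃ t ∈ Finset.Icc (j - 1) T, A t := by
    intro x ⟨t, htT, hjt⟩
    have h' : (j - 1) + 1 ≤ traj n (fun s => if h : s < T then x ⟨s, h⟩ else false) 1 t := by
      omega
    obtain ⟨hmt, hall⟩ := traj_chain n _ (j - 1) t h'
    refine Set.mem_biUnion (Finset.mem_Icc.mpr ⟨by omega, htT⟩) ?_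
    intro i h1 h2
    have := hall (i : ℕ) h1 h2
    rwa [dif_pos i.isLt, Fin.eta] at this
  have hνtrue : ν {true} = p := by
    rw [hν, PMF.toMeasure_apply_singleton _ _ (measurableSet_singleton _)]
    rw [hp]; simp [PMF.bernoulli, ENNReal.ofReal]
  have hAmeas : ∀ t ∈ Finset.Icc (j - 1) T, μ (A t) = p ^ (j - 1) := by
    intro t ht
    rw [Finset.mem_Icc] at ht
    have hAt : A t = Set.pi Set.univ
        (fun i : Fin T => if t - (j - 1) ≤ (i : ℕ) ∧ (i : ℕ) < t then {true} else Set.univ) := by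
      ext x
      simp only [hA, Set.mem_setOf_eq, Set.mem_pi, Set.mem_univ, forall_true_left]
      constructor
      · intro h i
        split_ifs with hi
        · exact h i hi.1 hi.2
        · trivial
      · intro h i h1 h2
        have := h i
        rwa [if_pos ⟨h1, h2⟩] at this
    rw [hAt, hμ, Measure.pi_pi]
    have : ∀ i : Fin T,
        ν (if t - (j - 1) ≤ (i : ℕ) ∧ (i : ℕ) < t then ({true} : Set Bool) else Set.univ)
        = if t - (j - 1) ≤ (i : ℕ) ∧ (i : ℕ) < t then p else 1 := by
      intro i
      split_ifs
      · exact hνtrue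
      · exact measure_univ
    rw [Finset.prod_congr rfl (fun i _ => this i), Finset.prod_ite, Finset.prod_const,
      Finset.prod_const, one_pow, mul_one]
    congr 1
    have hcard : (Finset.filter (fun i : Fin T => t - (j - 1) ≤ (i : ℕ) ∧ (i : ℕ) < t)
        Finset.univ).card = (Finset.Ico (t - (j - 1)) t).card := by
      apply Finset.card_nbij (fun i : Fin T => (i : ℕ))
      · intro i hi; simp at hi ⊢; omega
      · exact fun a _ b _ h => Fin.val_injective h
      · intro b hb
        simp only [Finset.coe_Ico, Set.mem_Ico] at hb
        exact ⟨⟨b, by omega⟩, by simp; omega, rfl⟩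
    rw [hcard, Nat.card_Ico]
    omega
  have hbound : μ {x : Fin T → Bool | ∃ t ≤ T,
        j ≤ traj n (fun s => if h : s < T then x ⟨s, h⟩ else false) 1 t}
      ≤ (T : ENNReal) * p ^ (j - 1) := by
    calc μ _ ≤ μ (⋃ t ∈ Finset.Icc (j - 1) T, A t) := measure_mono hsub
      _ ≤ ∑ t ∈ Finset.Icc (j - 1) T, μ (A t) := measure_biUnion_finset_le _ _
      _ = ∑ _t ∈ Finset.Icc (j - 1) T, p ^ (j - 1) := Finset.sum_congr rfl hAmeas
      _ = ((Finset.Icc (j - 1) T).card : ENNReal) * p ^ (j - 1) := by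
          rw [Finset.sum_const, nsmul_eq_mul]
      _ ≤ (T : ENNReal) * p ^ (j - 1) := by
          apply mul_le_mul_left
          rw [Nat.cast_le, Nat.card_Icc]
          omega
  have hrhs : (T : ENNReal) * p ^ (j - 1) = ENNReal.ofReal (T * q ^ (j - 1)) := by
    rw [hp, ← ENNReal.ofReal_pow hq0, ENNReal.ofReal_mul (by positivity),
      ENNReal.ofReal_natCast]
  rw [hrhs] at hbound
  calc (μ _).toReal ≤ (ENNReal.ofReal (T * q ^ (j - 1))).toReal :=
        ENNReal.toReal_mono ENNReal.ofReal_ne_top hbound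
    _ = T * q ^ (j - 1) := ENNReal.toReal_ofReal (by positivity)
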